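/- arXiv:1701.04801 — 3 statements merged into one kernel-verified Lean document; each statement's English description precedes it below -/
import Mathlib

section
/- In the lattice with basis A, B and intersection matrix ((8, d), (d, 8)) with d ≥ 10, there is no element R with R² = -2 and A·R = 1. (Comparison of discriminants: the sublattice generated by A and R would have discriminant dividing that of the full lattice, leading to a contradiction.) -/
/- STATEMENT 2: in the lattice L = ℤA ⊕ ℤB with intersection matrix ((8,d),(d,8)),
d ≥ 10, there is no element R with R² = -2 and A·R = 1. -/
theorem stmt_2 {M : Type*} [AddCommGroup M] [Module ℤ M]
    (f : M →ₗ[ℤ] M →ₗ[ℤ] ℤ) (A B : M) (d : ℤ) (hd : 10 ≤ d)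
    (hAA : f A A = 8) (hAB : f A B = d) (hBA : f B A = d) (hBB : f B B = 8)
    (hbasis : ∀ R : M, ∃ x y : ℤ, R = x • A + y • B) :
    ¬ ∃ R : M, f R R = -2 ∧ f A R = 1 := by
  rintro ⟨R, h1, h2⟩
  obtain ⟨x, y, rfl⟩ := hbasis R
  have e1 : f (x • A + y • B) (x • A + y • B) = x*x*8 + x*y*d + y*x*d + y*y*8 := by
    simp [map_add, map_smul, hAA, hAB, hBA, hBB]; ring
  have e2 : f A (x • A + y • B) = 8*x + d*y := by
    simp [map_add, map_smul, hAA, hAB]; ring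
  rw [e1] at h1
  rw [e2] at h2
  have hy : y = 0 ∨ 1 ≤ y^2 := by
    rcases eq_or_ne y 0 with h | h
    · exact Or.inl h
    · refine Or.inr ?_
      have : 0 < y^2 := by positivity
      linarith
  rcases hy with h | h
  · subst h; nlinarith
  · have hs : (8*x + d*y)^2 = 1 := by rw [h2]; norm_num
    have hd2 : (0:ℤ) ≤ d^2 - 64 := by nlinarith [sq_nonneg (d-10)]
    nlinarith [hs, sq_nonneg (d-10), mul_le_mul_of_nonneg_left h hd2]
end

section
/- For any integer d ≥ 10 there are no integers x, y satisfying simultaneously 8x + dy = 1 and 8x² + 2dxy + 8y² = -2. -/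
/- STATEMENT 3: for any integer d ≥ 10 there are no integers x, y with
8x + dy = 1 and 8x² + 2dxy + 8y² = -2. -/
theorem stmt_3 (d : ℤ) (hd : 10 ≤ d) :
    ¬ ∃ x y : ℤ, 8 * x + d * y = 1 ∧ 8 * x ^ 2 + 2 * d * x * y + 8 * y ^ 2 = -2 := by
  rintro ⟨x, y, h1, h2⟩
  have key : (d ^ 2 - 64) * y ^ 2 = 17 := by linear_combination (-8) * h2 + (8 * x + d * y + 1) * h1
  rcases eq_or_ne y 0 with hy | hy
  · simp [hy] at key
  · have hy1 : 0 < y ^ 2 := by positivity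
    have hd2 : 36 ≤ d ^ 2 - 64 := by nlinarith
    nlinarith
end

section
/- For any integer d ≥ 12 there are no integers x, y satisfying simultaneously 10x + dy = 1 and 10x² + 2dxy + 8y² = -2. -/
/- STATEMENT 4: for any integer d ≥ 12 there are no integers x, y with
10x + dy = 1 and 10x² + 2dxy + 8y² = -2. -/
theorem stmt_4 (d : ℤ) (hd : 12 ≤ d) :
    ¬ ∃ x y : ℤ, 10 * x + d * y = 1 ∧ 10 * x ^ 2 + 2 * d * x * y + 8 * y ^ 2 = -2 := by
  rintro ⟨x, y, h1, h2⟩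
  have h3 : 4 * y ^ 2 = 4 * x ^ 2 + (x - 1) * x - 1 := by nlinarith [h1, h2]
  obtain ⟨k, hk⟩ : Even ((x - 1) * x) := by simpa using Int.even_mul_succ_self (x - 1)
  have h5 : 2 * (2 * y ^ 2 - 2 * x ^ 2 - k) = -1 := by linarith
  omega
end
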